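/- Let 1/2 < α ≤ 1 and let A ⊆ G with |A| ≥ α|G|. Let U₁, U₂, V be independent G-valued random variables with U₁ and U₂ uniform on A (and vanishing off A). Then for all g ∈ G, −((1−α)/α)²·(1/|G|) ≤ Pr(U₁⁻¹ V U₂ = g) − 1/|G| ≤ ((1−α)/α)·(1/|G|). In particular U₁⁻¹ V U₂ is a ((1−α)/α)-uniform random variable on G. -/

import Mathlib

open Finset

variable {G : Type*} [Fintype G] [Group G]

/-- A probability mass function on a finite group. -/
def IsPMF (μ : G → ℝ) : Prop := (∀ g, 0 ≤ μ g) ∧ ∑ g, μ g = 1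

/-- For 1/2 < α ≤ 1, A ⊆ G with |A| ≥ α|G|, U₁, U₂ uniform on A and V arbitrary,
    all independent, the distribution of U₁⁻¹ V U₂ satisfies
    −((1−α)/α)²/|G| ≤ Pr(U₁⁻¹VU₂=g) − 1/|G| ≤ ((1−α)/α)/|G|. -/
theorem stmt5 [DecidableEq G] (α : ℝ) (hα1 : 1 / 2 < α) (hα2 : α ≤ 1)
    (A : Finset G) (hA : α * (Fintype.card G : ℝ) ≤ (A.card : ℝ))
    (ν : G → ℝ) (hν : IsPMF ν) (g : G) :
    -(((1 - α) / α) ^ 2) * (1 / (Fintype.card G : ℝ)) ≤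
        (∑ u : G, ∑ v : G,
          (if u ∈ A then ((A.card : ℝ))⁻¹ else 0) * ν v *
            (if v⁻¹ * u * g ∈ A then ((A.card : ℝ))⁻¹ else 0)) -
          1 / (Fintype.card G : ℝ) ∧
      (∑ u : G, ∑ v : G,
          (if u ∈ A then ((A.card : ℝ))⁻¹ else 0) * ν v *
            (if v⁻¹ * u * g ∈ A then ((A.card : ℝ))⁻¹ else 0)) -
          1 / (Fintype.card G : ℝ) ≤
        ((1 - α) / α) * (1 / (Fintype.card G : ℝ)) := by
  have hα0 : (0:ℝ) < α := by linarith
  set n : ℝ := (Fintype.card G : ℝ) with hn_def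
  set a : ℝ := (A.card : ℝ) with ha_def
  have hn : 0 < n := by
    rw [hn_def]
    exact_mod_cast Fintype.card_pos
  have ha : 0 < a := lt_of_lt_of_le (by positivity) hA
  have han : a ≤ n := by
    rw [ha_def, hn_def]
    exact_mod_cast Finset.card_le_univ A
  -- the counting set
  set N : G → ℕ := fun v => (univ.filter fun u => u ∈ A ∧ v⁻¹ * u * g ∈ A).card with hN_def
  have hNle : ∀ v : G, (N v : ℝ) ≤ a := by
    intro v
    have : (univ.filter fun u => u ∈ A ∧ v⁻¹ * u * g ∈ A) ⊆ A := by
      intro u hu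
      simp only [mem_filter] at hu
      exact hu.2.1
    rw [ha_def, hN_def]
    exact_mod_cast Finset.card_le_card this
  have hNge : ∀ v : G, 2 * a - n ≤ (N v : ℝ) := by
    intro v
    set B : Finset G := univ.filter fun u => v⁻¹ * u * g ∈ A with hB_def
    have hBcard : B.card = A.card := by
      have hBimg : B = A.image (fun x => v * x * g⁻¹) := by
        ext u
        simp only [hB_def, mem_filter, mem_univ, true_and, mem_image]
        constructor
        · intro h
          exact ⟨v⁻¹ * u * g, h, by group⟩
        · rintro ⟨x, hx, rfl⟩
          have hx' : v⁻¹ * (v * x * g⁻¹) * g = x := by group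
          rw [hx']; exact hx
      rw [hBimg]
      apply Finset.card_image_of_injective
      intro x y h
      exact mul_left_cancel (mul_right_cancel h)
    have hfilter : (univ.filter fun u => u ∈ A ∧ v⁻¹ * u * g ∈ A) = A ∩ B := by
      ext u
      simp [hB_def, Finset.mem_inter]
    have hcui : (A ∪ B).card + (A ∩ B).card = A.card + B.card :=
      Finset.card_union_add_card_inter A B
    have hun : (A ∪ B).card ≤ Fintype.card G := Finset.card_le_univ _
    have : (N v : ℕ) = (A ∩ B).card := by rw [hN_def]; simp only; rw [hfilter]
    rw [hBcard] at hcui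
    have h1 : ((A ∪ B).card : ℝ) + ((A ∩ B).card : ℝ) = a + a := by
      rw [ha_def]; exact_mod_cast hcui
    have h2 : ((A ∪ B).card : ℝ) ≤ n := by rw [hn_def]; exact_mod_cast hun
    have h3 : (N v : ℝ) = ((A ∩ B).card : ℝ) := by exact_mod_cast this
    linarith
  -- rewrite the double sum
  have hsum : (∑ u : G, ∑ v : G,
          (if u ∈ A then (a)⁻¹ else 0) * ν v *
            (if v⁻¹ * u * g ∈ A then (a)⁻¹ else 0))
      = ∑ v : G, ν v * ((N v : ℝ) * (a⁻¹ * a⁻¹)) := by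
    rw [Finset.sum_comm]
    refine Finset.sum_congr rfl fun v _ => ?_
    have : ∀ u : G, (if u ∈ A then (a)⁻¹ else 0) * ν v *
            (if v⁻¹ * u * g ∈ A then (a)⁻¹ else 0)
          = ν v * ((if u ∈ A ∧ v⁻¹ * u * g ∈ A then a⁻¹ * a⁻¹ else 0)) := by
      intro u
      by_cases h1 : u ∈ A <;> by_cases h2 : v⁻¹ * u * g ∈ A <;> simp [h1, h2] <;> ring
    rw [Finset.sum_congr rfl fun u _ => this u, ← Finset.mul_sum]
    rw [← Finset.sum_filter, Finset.sum_const, nsmul_eq_mul]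
  rw [hsum]
  -- bound the weighted sum
  have hpos2 : (0:ℝ) ≤ a⁻¹ * a⁻¹ := by positivity
  have hupper : ∑ v : G, ν v * ((N v : ℝ) * (a⁻¹ * a⁻¹)) ≤ a⁻¹ := by
    calc ∑ v : G, ν v * ((N v : ℝ) * (a⁻¹ * a⁻¹))
        ≤ ∑ v : G, ν v * (a * (a⁻¹ * a⁻¹)) := by
          refine Finset.sum_le_sum fun v _ => ?_
          exact mul_le_mul_of_nonneg_left
            (mul_le_mul_of_nonneg_right (hNle v) hpos2) (hν.1 v)
      _ = a⁻¹ := by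
          rw [← Finset.sum_mul, hν.2, one_mul]
          field_simp
  have hlower : (2 * a - n) * (a⁻¹ * a⁻¹) ≤ ∑ v : G, ν v * ((N v : ℝ) * (a⁻¹ * a⁻¹)) := by
    calc (2 * a - n) * (a⁻¹ * a⁻¹)
        = ∑ v : G, ν v * ((2 * a - n) * (a⁻¹ * a⁻¹)) := by
          rw [← Finset.sum_mul, hν.2, one_mul]
      _ ≤ ∑ v : G, ν v * ((N v : ℝ) * (a⁻¹ * a⁻¹)) := by
          refine Finset.sum_le_sum fun v _ => ?_
          exact mul_le_mul_of_nonneg_left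
            (mul_le_mul_of_nonneg_right (hNge v) hpos2) (hν.1 v)
  constructor
  · -- lower bound
    have key : -(((1 - α) / α) ^ 2) * (1 / n) ≤ (2 * a - n) * (a⁻¹ * a⁻¹) - 1 / n := by
      have e1 : -(((1 - α) / α) ^ 2) * (1 / n) = (-((1 - α) ^ 2)) / (α ^ 2 * n) := by
        field_simp
      have e2 : (2 * a - n) * (a⁻¹ * a⁻¹) - 1 / n = ((2 * a - n) * n - a ^ 2) / (a ^ 2 * n) := by
        field_simp
      rw [e1, e2, div_le_div_iff₀ (by positivity) (by positivity)]
      have f1 : 0 ≤ a - α * n := by linarith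
      have f2 : 0 ≤ α * n - (2 * α - 1) * a := by nlinarith
      nlinarith [mul_nonneg (mul_nonneg hn.le f1) f2, mul_pos hn hn]
    linarith
  · -- upper bound
    have h1a : a⁻¹ ≤ (α * n)⁻¹ := by
      apply inv_anti₀ (by positivity) hA
    have e3 : ((1 - α) / α) * (1 / n) = (α * n)⁻¹ - 1 / n := by
      field_simp
    linarith
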